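/- Let Σ and Σ̂ be real symmetric positive semidefinite d×d matrices, λ > 0, and 0 ≤ c̃ < 1/2. If ‖(Σ + λI)^{-1/2}·(Σ − Σ̂)·(Σ + λI)^{-1/2}‖ ≤ c̃, then ‖(Σ̂ + λI)^{-1/2}·(Σ̂ − Σ)·(Σ̂ + λI)^{-1/2}‖ ≤ c̃/(1 − c̃). -/

import Mathlib

open Matrix MeasureTheory

/-- The operator norm of a real `d × d` matrix induced by the Euclidean norm on `ℝ^d`. -/
noncomputable def opNorm {d : ℕ} (A : Matrix (Fin d) (Fin d) ℝ) : ℝ :=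
  ‖Matrix.toEuclideanCLM (𝕜 := ℝ) A‖

/-- The Euclidean norm `‖x‖₂` of a vector `x ∈ ℝ^d`. -/
noncomputable def enorm2 {d : ℕ} (x : Fin d → ℝ) : ℝ :=
  Real.sqrt (∑ i, x i ^ 2)

/-- Apply a scalar function to the eigenvalues of a symmetric matrix (continuous
functional calculus); junk value `0` if the matrix is not symmetric. -/
noncomputable def matFun {d : ℕ} (A : Matrix (Fin d) (Fin d) ℝ) (h : ℝ → ℝ) :
    Matrix (Fin d) (Fin d) ℝ :=
  if hA : A.IsHermitian then
    (hA.eigenvectorUnitary : Matrix (Fin d) (Fin d) ℝ) *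
      Matrix.diagonal (fun i => h (hA.eigenvalues i)) *
      star (hA.eigenvectorUnitary : Matrix (Fin d) (Fin d) ℝ)
  else 0

noncomputable def Matrix.PosSemidef.sqrt {d : ℕ} {A : Matrix (Fin d) (Fin d) ℝ} (_hA : A.PosSemidef) :
    Matrix (Fin d) (Fin d) ℝ := matFun A Real.sqrt

lemma matFun_eq_cfc {d : ℕ} {A : Matrix (Fin d) (Fin d) ℝ} (hA : A.IsHermitian) (f : ℝ → ℝ) :
    matFun A f = cfc f A := by
  rw [hA.cfc_eq, matFun, dif_pos hA, IsHermitian.cfc]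
  simp [Unitary.conjStarAlgAut_apply, Function.comp_def]

open scoped MatrixOrder in
lemma Matrix.PosSemidef.posSemidef_sqrt {d : ℕ} {A : Matrix (Fin d) (Fin d) ℝ} (hA : A.PosSemidef) :
    hA.sqrt.PosSemidef := by
  rw [Matrix.PosSemidef.sqrt, matFun_eq_cfc hA.1, ← nonneg_iff_posSemidef]
  exact cfc_nonneg fun x _ => Real.sqrt_nonneg x

open scoped MatrixOrder in
lemma Matrix.PosSemidef.sqrt_mul_self {d : ℕ} {A : Matrix (Fin d) (Fin d) ℝ} (hA : A.PosSemidef) :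
    hA.sqrt * hA.sqrt = A := by
  rw [Matrix.PosSemidef.sqrt, matFun_eq_cfc hA.1, ← cfc_mul _ _ A]
  have h0 : 0 ≤ A := hA.nonneg
  conv_rhs => rw [← cfc_id' ℝ A]
  refine cfc_congr fun x hx => ?_
  exact Real.mul_self_sqrt (spectrum_nonneg_of_nonneg h0 hx)

open scoped RealInnerProductSpace

section Aux
variable {d : ℕ}

lemma matFun_sqrt_eq {A : Matrix (Fin d) (Fin d) ℝ} (hA : A.PosSemidef) :
    matFun A Real.sqrt = hA.sqrt := by
  rfl

lemma dot_mulVec_left (P : Matrix (Fin d) (Fin d) ℝ) (y z : Fin d → ℝ) :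
    (P *ᵥ y) ⬝ᵥ z = y ⬝ᵥ (Pᵀ *ᵥ z) := by
  rw [dotProduct_mulVec, vecMul_transpose]

lemma quad_conj (M P : Matrix (Fin d) (Fin d) ℝ) (y : Fin d → ℝ) :
    (P *ᵥ y) ⬝ᵥ (M *ᵥ (P *ᵥ y)) = y ⬝ᵥ ((Pᵀ * M * P) *ᵥ y) := by
  rw [dot_mulVec_left, mulVec_mulVec, mulVec_mulVec, Matrix.mul_assoc]

/-- transfer of quadratic-form bounds through conjugation by the inverse square root -/
lemma quad_transfer {A : Matrix (Fin d) (Fin d) ℝ} (hA : A.PosDef)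
    (M : Matrix (Fin d) (Fin d) ℝ) {t : ℝ} :
    (∀ x : Fin d → ℝ,
        |x ⬝ᵥ (((hA.posSemidef.sqrt)⁻¹ * M * (hA.posSemidef.sqrt)⁻¹) *ᵥ x)| ≤ t * (x ⬝ᵥ x)) ↔
    (∀ y : Fin d → ℝ, |y ⬝ᵥ (M *ᵥ y)| ≤ t * (y ⬝ᵥ (A *ᵥ y))) := by
  set s := hA.posSemidef.sqrt with hs
  set r := s⁻¹ with hr
  have hdet2 : s.det * s.det = A.det := by
    rw [← det_mul, hA.posSemidef.sqrt_mul_self]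
  have hdet : IsUnit s.det := by
    have hd := hA.det_pos
    refine isUnit_iff_ne_zero.mpr fun h0 => ?_
    rw [h0, zero_mul] at hdet2
    rw [← hdet2] at hd
    exact lt_irrefl 0 hd
  have hsr : r * s = 1 := nonsing_inv_mul _ hdet
  have hrs : s * r = 1 := mul_nonsing_inv _ hdet
  have hstH : sᴴ = s := hA.posSemidef.posSemidef_sqrt.1
  have hst : sᵀ = s := by rw [← conjTranspose_eq_transpose_of_trivial]; exact hstH
  have hrtH : rᴴ = r := hA.posSemidef.posSemidef_sqrt.1.inv
  have hrt : rᵀ = r := by rw [← conjTranspose_eq_transpose_of_trivial]; exact hrtH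
  have hss : s * s = A := hA.posSemidef.sqrt_mul_self
  constructor
  · intro H y
    have key := H (s *ᵥ y)
    rw [quad_conj, hst] at key
    have e1 : s * (r * M * r) * s = M := by
      simp only [← Matrix.mul_assoc]
      rw [hrs, Matrix.one_mul, Matrix.mul_assoc, hsr, Matrix.mul_one]
    rw [e1] at key
    have e2 : (s *ᵥ y) ⬝ᵥ (s *ᵥ y) = y ⬝ᵥ (A *ᵥ y) := by
      rw [dot_mulVec_left, mulVec_mulVec, hst, hss]
    rwa [e2] at key
  · intro H x
    have key := H (r *ᵥ x)
    rw [quad_conj, quad_conj, hrt] at key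
    have e1 : r * A * r = 1 := by
      rw [← hss, ← Matrix.mul_assoc, Matrix.mul_assoc (r * s), hsr, hrs, Matrix.one_mul]
    rw [e1, one_mulVec] at key
    exact key

lemma inner_bridge (M : Matrix (Fin d) (Fin d) ℝ) (x : Fin d → ℝ) :
    ⟪(WithLp.equiv 2 (Fin d → ℝ)).symm x,
      Matrix.toEuclideanCLM (𝕜 := ℝ) M ((WithLp.equiv 2 (Fin d → ℝ)).symm x)⟫
      = x ⬝ᵥ (M *ᵥ x) := by
  rw [Matrix.inner_toEuclideanCLM]
  simp [PiLp.inner_apply, dotProduct, mul_comm]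

lemma norm_bridge (x : Fin d → ℝ) :
    ‖(WithLp.equiv 2 (Fin d → ℝ)).symm x‖ ^ 2 = x ⬝ᵥ x := by
  rw [← real_inner_self_eq_norm_sq]
  simp only [WithLp.equiv_symm_apply, PiLp.inner_apply, RCLike.inner_apply, conj_trivial, dotProduct]

lemma aux_polar {E : Type*} [NormedAddCommGroup E] [InnerProductSpace ℝ E]
    (T : E →L[ℝ] E) (hsym : ∀ u v : E, ⟪u, T v⟫ = ⟪v, T u⟫) {t : ℝ} (ht : 0 ≤ t)
    (H : ∀ x : E, |⟪x, T x⟫| ≤ t * ‖x‖ ^ 2) : ‖T‖ ≤ t := by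
  apply T.opNorm_le_bound ht
  intro x
  by_cases hTx : T x = 0
  · rw [hTx, norm_zero]; positivity
  by_cases hx : x = 0
  · exact absurd (by rw [hx, map_zero]) hTx
  have hTx' : (0:ℝ) < ‖T x‖ := norm_pos_iff.mpr hTx
  have hx' : (0:ℝ) < ‖x‖ := norm_pos_iff.mpr hx
  set y : E := (‖x‖ / ‖T x‖) • T x with hy
  have hny : ‖y‖ = ‖x‖ := by
    rw [hy, norm_smul, Real.norm_eq_abs, abs_of_nonneg (by positivity)]
    field_simp
  have hyTx : ⟪y, T x⟫ = ‖x‖ * ‖T x‖ := by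
    rw [hy, real_inner_smul_left, real_inner_self_eq_norm_sq]
    field_simp
  have hq1 : ⟪x + y, T (x + y)⟫ = ⟪x, T x⟫ + ⟪y, T y⟫ + 2 * ⟪y, T x⟫ := by
    rw [map_add, inner_add_left, inner_add_right, inner_add_right, hsym x y]; ring
  have hq2 : ⟪x - y, T (x - y)⟫ = ⟪x, T x⟫ + ⟪y, T y⟫ - 2 * ⟪y, T x⟫ := by
    rw [map_sub, inner_sub_left, inner_sub_right, inner_sub_right, hsym x y]; ring
  have h1 := (abs_le.1 (H (x + y))).2
  have h2 := (abs_le.1 (H (x - y))).1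
  have hpar1 : ‖x + y‖ ^ 2 = ‖x‖ ^ 2 + 2 * ⟪x, y⟫ + ‖y‖ ^ 2 := norm_add_sq_real x y
  have hpar2 : ‖x - y‖ ^ 2 = ‖x‖ ^ 2 - 2 * ⟪x, y⟫ + ‖y‖ ^ 2 := norm_sub_sq_real x y
  rw [hq1, hpar1, hyTx, hny] at h1
  rw [hq2, hpar2, hyTx, hny] at h2
  have key : ‖x‖ * ‖T x‖ ≤ t * ‖x‖ ^ 2 := by nlinarith
  nlinarith [key, hx']

lemma opNorm_le_of_quad (M : Matrix (Fin d) (Fin d) ℝ) (hM : M.IsHermitian) {t : ℝ} (ht : 0 ≤ t)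
    (H : ∀ x : Fin d → ℝ, |x ⬝ᵥ (M *ᵥ x)| ≤ t * (x ⬝ᵥ x)) :
    ‖Matrix.toEuclideanCLM (𝕜 := ℝ) M‖ ≤ t := by
  refine aux_polar _ ?_ ht ?_
  · intro u v
    have hs := Matrix.isHermitian_iff_isSymmetric.mp hM
    have h1 : ∀ w, Matrix.toEuclideanCLM (𝕜 := ℝ) M w = Matrix.toEuclideanLin M w := fun w => by
      rw [← Matrix.coe_toEuclideanCLM_eq_toEuclideanLin]; rfl
    rw [h1, h1, ← hs u v, real_inner_comm]
  · intro x
    obtain ⟨y, rfl⟩ : ∃ y, (WithLp.equiv 2 (Fin d → ℝ)).symm y = x :=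
      ⟨WithLp.equiv 2 _ x, by simp⟩
    rw [inner_bridge, norm_bridge]
    exact H y

lemma quad_le_of_opNorm_le {M : Matrix (Fin d) (Fin d) ℝ} {t : ℝ}
    (hn : ‖Matrix.toEuclideanCLM (𝕜 := ℝ) M‖ ≤ t) (x : Fin d → ℝ) :
    |x ⬝ᵥ (M *ᵥ x)| ≤ t * (x ⬝ᵥ x) := by
  set T := Matrix.toEuclideanCLM (𝕜 := ℝ) M with hT
  set x' := (WithLp.equiv 2 (Fin d → ℝ)).symm x with hx'
  have h1 : |⟪x', T x'⟫| ≤ ‖x'‖ * ‖T x'‖ := abs_real_inner_le_norm _ _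
  have h2 : ‖T x'‖ ≤ ‖T‖ * ‖x'‖ := T.le_opNorm _
  rw [← inner_bridge, ← norm_bridge]
  nlinarith [h1, h2, hn, norm_nonneg x', norm_nonneg (T x'), norm_nonneg T, sq_nonneg ‖x'‖]

end Aux

/-- If `Σ, Σ̂` are PSD, `λ > 0`, `0 ≤ c̃ < 1/2` and
`‖(Σ+λI)^{-1/2} (Σ - Σ̂) (Σ+λI)^{-1/2}‖ ≤ c̃`, then
`‖(Σ̂+λI)^{-1/2} (Σ̂ - Σ) (Σ̂+λI)^{-1/2}‖ ≤ c̃/(1-c̃)`. -/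
theorem statement3 {d : ℕ} (hd : 0 < d) (S Shat : Matrix (Fin d) (Fin d) ℝ)
    (hS : S.PosSemidef) (hShat : Shat.PosSemidef) (lam c : ℝ)
    (hlam : 0 < lam) (hc0 : 0 ≤ c) (hc : c < 1 / 2)
    (h : opNorm ((matFun (S + lam • 1) Real.sqrt)⁻¹ * (S - Shat) *
        (matFun (S + lam • 1) Real.sqrt)⁻¹) ≤ c) :
    opNorm ((matFun (Shat + lam • 1) Real.sqrt)⁻¹ * (Shat - S) *
        (matFun (Shat + lam • 1) Real.sqrt)⁻¹) ≤ c / (1 - c) := by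
  simp only [opNorm] at h ⊢
  have h1c : (0:ℝ) < 1 - c := by linarith
  have hL : (lam • (1 : Matrix (Fin d) (Fin d) ℝ)).PosDef := by
    rw [smul_one_eq_diagonal]
    exact posDef_diagonal_iff.mpr fun i => hlam
  have hA : (S + lam • (1 : Matrix (Fin d) (Fin d) ℝ)).PosDef := Matrix.PosDef.posSemidef_add hS hL
  have hB : (Shat + lam • (1 : Matrix (Fin d) (Fin d) ℝ)).PosDef := Matrix.PosDef.posSemidef_add hShat hL
  rw [matFun_sqrt_eq hA.posSemidef] at h
  rw [matFun_sqrt_eq hB.posSemidef]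
  have hq1 : ∀ y : Fin d → ℝ, |y ⬝ᵥ ((S - Shat) *ᵥ y)| ≤
      c * (y ⬝ᵥ ((S + lam • (1 : Matrix (Fin d) (Fin d) ℝ)) *ᵥ y)) :=
    (quad_transfer hA (S - Shat)).mp (quad_le_of_opNorm_le h)
  have hq2 : ∀ y : Fin d → ℝ, |y ⬝ᵥ ((Shat - S) *ᵥ y)| ≤
      (c / (1 - c)) * (y ⬝ᵥ ((Shat + lam • (1 : Matrix (Fin d) (Fin d) ℝ)) *ᵥ y)) := by
    intro y
    have e1 := hq1 y
    have ea : (0:ℝ) ≤ y ⬝ᵥ ((S + lam • (1 : Matrix (Fin d) (Fin d) ℝ)) *ᵥ y) := by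
      simpa using hA.posSemidef.dotProduct_mulVec_nonneg y
    have eb : (0:ℝ) ≤ y ⬝ᵥ ((Shat + lam • (1 : Matrix (Fin d) (Fin d) ℝ)) *ᵥ y) := by
      simpa using hB.posSemidef.dotProduct_mulVec_nonneg y
    have ediff : y ⬝ᵥ ((S - Shat) *ᵥ y) =
        y ⬝ᵥ ((S + lam • (1 : Matrix (Fin d) (Fin d) ℝ)) *ᵥ y) -
        y ⬝ᵥ ((Shat + lam • (1 : Matrix (Fin d) (Fin d) ℝ)) *ᵥ y) := by
      rw [show S - Shat = (S + lam • (1 : Matrix (Fin d) (Fin d) ℝ)) -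
        (Shat + lam • (1 : Matrix (Fin d) (Fin d) ℝ)) by abel, sub_mulVec, dotProduct_sub]
    have ediff2 : y ⬝ᵥ ((Shat - S) *ᵥ y) = -(y ⬝ᵥ ((S - Shat) *ᵥ y)) := by
      rw [show Shat - S = -(S - Shat) by abel, neg_mulVec, dotProduct_neg]
    have hdc : (c / (1 - c)) * (1 - c) = c := div_mul_cancel₀ c h1c.ne'
    have hdc0 : 0 ≤ c / (1 - c) := div_nonneg hc0 h1c.le
    rw [ediff2, ediff, abs_neg]
    rw [ediff, abs_le] at e1
    rw [abs_le]
    constructor <;> nlinarith [e1.1, e1.2, ea, eb, hdc, hdc0, h1c,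
      mul_le_mul_of_nonneg_left e1.1 hdc0, mul_le_mul_of_nonneg_left e1.2 hdc0]
  have herm : ((hB.posSemidef.sqrt)⁻¹ * (Shat - S) * (hB.posSemidef.sqrt)⁻¹).IsHermitian := by
    have hM : (Shat - S).IsHermitian := hShat.1.sub hS.1
    have hr : ((hB.posSemidef.sqrt)⁻¹).IsHermitian := hB.posSemidef.posSemidef_sqrt.1.inv
    show _ᴴ = _
    rw [conjTranspose_mul, conjTranspose_mul, hr, hM, Matrix.mul_assoc]
  exact opNorm_le_of_quad _ herm (div_nonneg hc0 h1c.le)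
    ((quad_transfer hB (Shat - S)).mpr hq2)
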